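/- (Fisher's inequality) In any (v,b,r,k,λ)-BIBD with 2 ≤ k < v and λ ≥ 1, the number of blocks satisfies b ≥ v. -/

import Mathlib

open Finset

/-- Fisher's inequality: in any (v,b,r,k,λ)-BIBD with 2 ≤ k < v and λ ≥ 1, b ≥ v. -/
theorem fisher_inequality (v b r k lam : ℕ) (hk2 : 2 ≤ k) (hkv : k < v) (hlam : 1 ≤ lam)
    (M : Matrix (Fin v) (Fin b) ℝ)
    (h01 : ∀ i j, M i j = 0 ∨ M i j = 1)
    (hcol : ∀ j, ∑ i, M i j = k)
    (hrow : ∀ i, ∑ j, M i j = r)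
    (hpair : ∀ i i', i ≠ i' → ∑ j, M i j * M i' j = lam) :
    b ≥ v := by
  have hsq : ∀ i j, M i j * M i j = M i j := by
    intro i j; rcases h01 i j with h | h <;> simp [h]
  have hdiag : ∀ i, ∑ j, M i j * M i j = r := by
    intro i; simp_rw [hsq]; exact hrow i
  -- counting identity: (v-1)·λ = (k-1)·r
  have hi0 : (0 : ℕ) < v := by omega
  set i0 : Fin v := ⟨0, hi0⟩
  have key : ((v : ℝ) - 1) * lam = ((k : ℝ) - 1) * r := by
    have h1 : ∑ i' ∈ univ.erase i0, (lam : ℝ) =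
        ∑ i' ∈ univ.erase i0, ∑ j, M i0 j * M i' j := by
      refine Finset.sum_congr rfl fun i' hi' => ?_
      exact (hpair i0 i' (Ne.symm (Finset.ne_of_mem_erase hi'))).symm
    have hL : ∑ i' ∈ univ.erase i0, (lam : ℝ) = ((v : ℝ) - 1) * lam := by
      rw [Finset.sum_const, Finset.card_erase_of_mem (mem_univ _), Finset.card_univ,
        Fintype.card_fin, nsmul_eq_mul]
      push_cast [Nat.cast_sub hi0]
      ring
    have hR : ∑ i' ∈ univ.erase i0, ∑ j, M i0 j * M i' j = ((k : ℝ) - 1) * r := by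
      rw [Finset.sum_comm]
      have : ∀ j, ∑ i' ∈ univ.erase i0, M i0 j * M i' j
          = M i0 j * ((k : ℝ) - M i0 j) := by
        intro j
        rw [← Finset.mul_sum, Finset.sum_erase_eq_sub (mem_univ _), hcol j]
      simp_rw [this, mul_sub, hsq]
      rw [Finset.sum_sub_distrib, ← Finset.sum_mul, hrow i0]; ring
    rw [← hL, h1, hR]
  have hrl : (lam : ℝ) < r := by
    have hk1 : (2 : ℝ) ≤ k := by exact_mod_cast hk2
    have hkv' : (k : ℝ) + 1 ≤ v := by exact_mod_cast hkv
    have hl1 : (1 : ℝ) ≤ lam := by exact_mod_cast hlam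
    nlinarith [key]
  -- M * M.transpose is positive definite
  let B : Matrix (Fin 1) (Fin v) ℝ := fun _ _ => Real.sqrt lam
  have hlnn : (0 : ℝ) ≤ lam := by positivity
  have hA : M * M.transpose = Matrix.diagonal (fun _ : Fin v => (r : ℝ) - lam) + B.conjTranspose * B := by
    ext i i'
    simp only [Matrix.mul_apply, Matrix.transpose_apply, Matrix.add_apply,
      Matrix.diagonal_apply, Matrix.conjTranspose_apply, B, RCLike.star_def, starRingEnd_apply,
      star_trivial]
    show ∑ j, M i j * M i' j = (if i = i' then (r : ℝ) - lam else 0) +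
      ∑ _x : Fin 1, Real.sqrt lam * Real.sqrt lam
    rw [Fin.sum_univ_one, Real.mul_self_sqrt hlnn]
    by_cases h : i = i'
    · subst h; simp [hdiag i]
    · simp [h, hpair i i' h]
  have hpos : (M * M.transpose).PosDef := by
    rw [hA]
    exact (Matrix.PosDef.diagonal fun _ => by linarith).add_posSemidef
      (Matrix.posSemidef_conjTranspose_mul_self B)
  have hunit : IsUnit (M * M.transpose) := by
    rw [Matrix.isUnit_iff_isUnit_det]
    exact hpos.det_pos.ne'.isUnit
  have hrank : (M * M.transpose).rank = v := by
    rw [Matrix.rank_of_isUnit _ hunit, Fintype.card_fin]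
  calc v = (M * M.transpose).rank := hrank.symm
    _ ≤ M.rank := Matrix.rank_mul_le_left M M.transpose
    _ ≤ b := M.rank_le_card_width.trans (by simp)
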